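/- Let G be a Cayley graph of (Z/2Z)^n with generating set S. If there exist distinct elements e₁, …, e_k ∈ S with e₁ + ⋯ + e_k = 0 and k ≡ 2 or 3 (mod 4), and S is a Sidon set, then G admits no orthogonal signing. -/

import Mathlib

open scoped Classical

def cayley (n : ℕ) (S : Set (Fin n → ZMod 2)) : SimpleGraph (Fin n → ZMod 2) where
  Adj x y := x ≠ y ∧ x + y ∈ S
  symm := by
    constructor
    intro x y h
    exact ⟨h.1.symm, by rw [add_comm]; exact h.2⟩
  loopless := by
    constructor
    intro x h
    exact h.1 rfl

/-- An orthogonal signing of a graph `G` on a finite vertex set: a symmetric matrix with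
entries `±1` on edges and `0` elsewhere, whose distinct rows are orthogonal. -/
def IsOrthSigning {V : Type*} [Fintype V] (G : SimpleGraph V) (M : Matrix V V ℝ) : Prop :=
  M.IsSymm ∧ (∀ u v, G.Adj u v → M u v = 1 ∨ M u v = -1) ∧
    (∀ u v, ¬ G.Adj u v → M u v = 0) ∧
    (∀ u v, u ≠ v → ∑ w, M u w * M v w = 0)

namespace Stmt15Aux

variable {n : ℕ}

abbrev V (n : ℕ) := Fin n → ZMod 2

lemma addself (a : V n) : a + a = 0 := by
  funext i
  have h : ∀ x : ZMod 2, x + x = 0 := by decide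
  simpa [Pi.add_apply] using h (a i)

lemma cancel (a b : V n) : a + (a + b) = b := by
  rw [← add_assoc, addself, zero_add]

/-- Product of signs along a walk from `x` with steps given by a list. -/
noncomputable def wp (M : Matrix (V n) (V n) ℝ) : V n → List (V n) → ℝ
  | _, [] => 1
  | x, s :: L => M x (x + s) * wp M (x + s) L

section

variable {S : Set (V n)} {M : Matrix (V n) (V n) ℝ}
  (h0 : (0 : V n) ∉ S)
  (hSidon : ∀ s₁ ∈ S, ∀ s₂ ∈ S, ∀ s₃ ∈ S, ∀ s₄ ∈ S,
      s₁ ≠ s₂ → s₃ ≠ s₄ → s₁ + s₂ = s₃ + s₄ →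
      ({s₁, s₂} : Set (V n)) = {s₃, s₄})
  (hM : IsOrthSigning (cayley n S) M)

include hM in
lemma edge_pm {x : V n} {s : V n} (hs : s ∈ S) (h0 : (0 : V n) ∉ S) :
    M x (x + s) = 1 ∨ M x (x + s) = -1 := by
  apply hM.2.1
  refine ⟨?_, ?_⟩
  · intro h
    apply h0
    have h' : x + x = x + (x + s) := congrArg (x + ·) h
    rw [addself, cancel] at h'
    rw [h']; exact hs
  · show x + (x + s) ∈ S
    rw [cancel]; exact hs

include hM h0 in
lemma wp_ne_zero (x : V n) (L : List (V n)) (hL : ∀ t ∈ L, t ∈ S) :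
    wp M x L ≠ 0 := by
  induction L generalizing x with
  | nil => simp [wp]
  | cons s L ih =>
    have hs := hL s (by simp)
    have h1 := edge_pm hM hs h0 (x := x)
    have h2 := ih (x + s) (fun t ht => hL t (by simp [ht]))
    rcases h1 with h | h <;> simp [wp, h, h2]

include hSidon hM in
lemma core (x : V n) {s t : V n} (hs : s ∈ S) (ht : t ∈ S) (hst : s ≠ t) :
    M x (x + s) * M (x + s) (x + s + t) = -(M x (x + t) * M (x + t) (x + t + s)) := by
  have huv : x ≠ x + s + t := by
    intro h
    apply hst
    have h' : x + x = x + (x + s + t) := congrArg (x + ·) h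
    rw [addself, add_assoc, cancel] at h'
    have h2 : ∀ a b : ZMod 2, 0 = a + b → a = b := by decide
    funext i
    exact h2 (s i) (t i) (congrFun h' i)
  have horth := hM.2.2.2 x (x + s + t) huv
  have hxsne : x + s ≠ x + t := by
    intro h; exact hst (by
      have := congrArg (x + ·) h
      simpa [cancel] using this)
  have hzero : ∀ w ∈ Finset.univ, w ≠ x + s ∧ w ≠ x + t →
      M x w * M (x + s + t) w = 0 := by
    rintro w - ⟨hw1, hw2⟩
    by_contra hne
    have hxw : M x w ≠ 0 := fun h => hne (by rw [h, zero_mul])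
    have hvw : M (x + s + t) w ≠ 0 := fun h => hne (by rw [h, mul_zero])
    have hadj1 : (cayley n S).Adj x w := by
      by_contra h; exact hxw (hM.2.2.1 _ _ h)
    have hadj2 : (cayley n S).Adj (x + s + t) w := by
      by_contra h; exact hvw (hM.2.2.1 _ _ h)
    have hm1 : x + w ∈ S := hadj1.2
    have hm2 : (x + s + t) + w ∈ S := hadj2.2
    have hne12 : x + w ≠ (x + s + t) + w := by
      intro h
      have h' : (x + w) + w = ((x + s + t) + w) + w := congrArg (· + w) h
      rw [add_assoc x w w, add_assoc (x + s + t) w w, addself, add_zero, add_zero] at h'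
      exact huv h'
    have hsum2 : (x + w) + ((x + s + t) + w) = s + t := by
      funext i
      have h2 : ∀ a b c d : ZMod 2, (a + b) + (a + c + d + b) = c + d := by decide
      simpa [Pi.add_apply] using h2 (x i) (w i) (s i) (t i)
    have hset := hSidon _ hm1 _ hm2 _ hs _ ht hne12 hst hsum2
    have hx : x + w ∈ ({s, t} : Set (V n)) := by
      rw [← hset]; exact Set.mem_insert _ _
    rcases hx with h | h
    · exact hw1 (by rw [← h, cancel])
    · exact hw2 (by rw [← Set.mem_singleton_iff.mp h, cancel])
  have hsum := Finset.sum_eq_add_of_mem (x + s) (x + t) (Finset.mem_univ _)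
    (Finset.mem_univ _) hxsne hzero
  rw [hsum] at horth
  have e1 : M (x + s + t) (x + s) = M (x + s) (x + s + t) := hM.1.apply _ _
  have e2 : M (x + s + t) (x + t) = M (x + t) (x + t + s) := by
    rw [hM.1.apply, add_right_comm]
  rw [e1, e2] at horth
  linarith
  -- horth : M x (x+s) * M (x+s) (x+s+t) + M x (x+t) * M (x+t) (x+t+s) = 0

end

lemma wp_append (M : Matrix (V n) (V n) ℝ) (x : V n) (L₁ L₂ : List (V n)) :
    wp M x (L₁ ++ L₂) = wp M x L₁ * wp M (x + L₁.sum) L₂ := by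
  induction L₁ generalizing x with
  | nil => simp [wp]
  | cons s L ih =>
    rw [List.cons_append]
    show M x (x + s) * wp M (x + s) (L ++ L₂) = _
    rw [ih, List.sum_cons, ← add_assoc]
    exact (mul_assoc _ _ _).symm

section

variable {S : Set (V n)} {M : Matrix (V n) (V n) ℝ}
  (h0 : (0 : V n) ∉ S)
  (hSidon : ∀ s₁ ∈ S, ∀ s₂ ∈ S, ∀ s₃ ∈ S, ∀ s₄ ∈ S,
      s₁ ≠ s₂ → s₃ ≠ s₄ → s₁ + s₂ = s₃ + s₄ →
      ({s₁, s₂} : Set (V n)) = {s₃, s₄})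
  (hM : IsOrthSigning (cayley n S) M)

include hM in
lemma wp_reverse_eq (x : V n) (L : List (V n)) :
    wp M x L = wp M (x + L.sum) L.reverse := by
  induction L generalizing x with
  | nil => simp [wp]
  | cons s L ih =>
    have h1 : x + (s :: L).sum + L.reverse.sum = x + s := by
      rw [List.sum_reverse, List.sum_cons]
      funext i
      have h2 : ∀ a b c : ZMod 2, a + (b + c) + c = a + b := by decide
      simpa [Pi.add_apply] using h2 (x i) (s i) (L.sum i)
    have h2 : (x + s) + s = x := by
      rw [add_assoc, addself, add_zero]
    calc wp M x (s :: L) = M x (x + s) * wp M (x + s) L := rfl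
      _ = M x (x + s) * wp M (x + s + L.sum) L.reverse := by rw [ih]
      _ = wp M (x + (s :: L).sum) (L.reverse ++ [s]) := by
          rw [wp_append, h1]
          have : wp M (x + s) [s] = M (x + s) x := by
            simp [wp, h2]
          rw [this, hM.1.apply x (x + s)]
          have : x + (s :: L).sum = x + s + L.sum := by
            rw [List.sum_cons, add_assoc]
          rw [this, mul_comm]
      _ = wp M (x + (s :: L).sum) (s :: L).reverse := by
          rw [List.reverse_cons]

omit h0 in
include hSidon hM in
lemma wp_bubble (x : V n) {s : V n} (hs : s ∈ S) (L : List (V n))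
    (hL : ∀ t ∈ L, t ∈ S ∧ t ≠ s) :
    wp M x (L ++ [s]) = (-1) ^ L.length * wp M x (s :: L) := by
  induction L generalizing x with
  | nil => simp
  | cons t L ih =>
    obtain ⟨ht, hts⟩ := hL t (by simp)
    have step := core hSidon hM x hs ht (fun h => hts (h ▸ rfl))
    have step2 : M x (x + t) * M (x + t) (x + t + s)
        = -(M x (x + s) * M (x + s) (x + s + t)) := by rw [step]; ring
    have hswap : x + t + s = x + s + t := add_right_comm x t s
    calc wp M x ((t :: L) ++ [s])
        = M x (x + t) * wp M (x + t) (L ++ [s]) := rfl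
      _ = M x (x + t) * ((-1) ^ L.length * wp M (x + t) (s :: L)) := by
          rw [ih (x + t) (fun u hu => hL u (by simp [hu]))]
      _ = M x (x + t) * ((-1) ^ L.length
            * (M (x + t) ((x + t) + s) * wp M ((x + t) + s) L)) := rfl
      _ = (-1) ^ L.length * ((M x (x + t) * M (x + t) (x + t + s)) * wp M (x + t + s) L) := by
          ring
      _ = (-1) ^ L.length * (-(M x (x + s) * M (x + s) (x + s + t)) * wp M (x + s + t) L) := by
          rw [step2, hswap]
      _ = (-1) ^ (t :: L).length * wp M x (s :: t :: L) := by
          show _ = (-1) ^ (L.length + 1)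
            * (M x (x + s) * (M (x + s) ((x + s) + t) * wp M ((x + s) + t) L))
          ring

omit h0 in
include hSidon hM in
lemma wp_rev_sign (x : V n) (L : List (V n)) (hnd : L.Nodup) (hL : ∀ t ∈ L, t ∈ S) :
    wp M x L.reverse = (-1) ^ (L.length.choose 2) * wp M x L := by
  induction L generalizing x with
  | nil => simp
  | cons s L ih =>
    have hs := hL s (by simp)
    have hnd' : L.Nodup := (List.nodup_cons.mp hnd).2
    have hns : s ∉ L := (List.nodup_cons.mp hnd).1
    rw [List.reverse_cons,
      wp_bubble hSidon hM x hs L.reverse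
        (fun t ht => ⟨hL t (by simp at ht ⊢; exact Or.inr ht),
          fun h => hns (h ▸ (List.mem_reverse.mp ht))⟩)]
    have : wp M x (s :: L.reverse) = M x (x + s) * wp M (x + s) L.reverse := rfl
    rw [this, ih (x + s) hnd' (fun t ht => hL t (by simp [ht]))]
    have hc : (s :: L).length.choose 2 = L.length + L.length.choose 2 := by
      show (L.length + 1).choose 2 = _
      rw [Nat.choose_succ_succ, Nat.choose_one_right]
    rw [List.length_reverse, hc, pow_add]
    show _ = (-1) ^ L.length * (-1) ^ L.length.choose 2 * (M x (x + s) * wp M (x + s) L)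
    ring

end

end Stmt15Aux

theorem stmt15 (n k : ℕ) (S : Set (Fin n → ZMod 2)) (h0 : (0 : Fin n → ZMod 2) ∉ S)
    (hSidon : ∀ s₁ ∈ S, ∀ s₂ ∈ S, ∀ s₃ ∈ S, ∀ s₄ ∈ S,
      s₁ ≠ s₂ → s₃ ≠ s₄ → s₁ + s₂ = s₃ + s₄ →
      ({s₁, s₂} : Set (Fin n → ZMod 2)) = {s₃, s₄})
    (e : Fin k → (Fin n → ZMod 2)) (hinj : Function.Injective e)
    (heS : ∀ i, e i ∈ S) (hsum : ∑ i, e i = 0)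
    (hmod : k % 4 = 2 ∨ k % 4 = 3) :
    ¬ ∃ M : Matrix (Fin n → ZMod 2) (Fin n → ZMod 2) ℝ, IsOrthSigning (cayley n S) M := by
  rintro ⟨M, hM⟩
  classical
  set L : List (Fin n → ZMod 2) := List.ofFn e with hLdef
  have hnd : L.Nodup := List.nodup_ofFn.mpr hinj
  have hmem : ∀ t ∈ L, t ∈ S := by
    intro t ht
    rw [hLdef, List.mem_ofFn] at ht
    obtain ⟨i, rfl⟩ := ht
    exact heS i
  have hLsum : L.sum = 0 := by
    rw [hLdef, List.sum_ofFn, hsum]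
  have hLlen : L.length = k := by rw [hLdef, List.length_ofFn]
  have P0 : Stmt15Aux.wp M 0 L ≠ 0 := Stmt15Aux.wp_ne_zero h0 hM 0 L hmem
  have h1 : Stmt15Aux.wp M 0 L = Stmt15Aux.wp M 0 L.reverse := by
    have := Stmt15Aux.wp_reverse_eq hM 0 L
    rwa [hLsum, add_zero] at this
  have h2 : Stmt15Aux.wp M 0 L.reverse
      = (-1) ^ (k.choose 2) * Stmt15Aux.wp M 0 L := by
    rw [Stmt15Aux.wp_rev_sign hSidon hM 0 L hnd hmem, hLlen]
  have hodd : Odd (k.choose 2) := by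
    rw [Nat.choose_two_right]
    rcases hmod with h | h
    · obtain ⟨q, rfl⟩ : ∃ q, k = 4 * q + 2 := ⟨k / 4, by omega⟩
      have : (4 * q + 2) * ((4 * q + 2) - 1) = 2 * ((2 * q + 1) * (4 * q + 1)) := by
        have : (4 * q + 2) - 1 = 4 * q + 1 := by omega
        rw [this]; ring
      rw [this, Nat.mul_div_cancel_left _ (by norm_num)]
      exact Odd.mul ⟨q, by ring⟩ ⟨2 * q, by ring⟩
    · obtain ⟨q, rfl⟩ : ∃ q, k = 4 * q + 3 := ⟨k / 4, by omega⟩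
      have : (4 * q + 3) * ((4 * q + 3) - 1) = 2 * ((4 * q + 3) * (2 * q + 1)) := by
        have : (4 * q + 3) - 1 = 4 * q + 2 := by omega
        rw [this]; ring
      rw [this, Nat.mul_div_cancel_left _ (by norm_num)]
      exact Odd.mul ⟨2 * q + 1, by ring⟩ ⟨q, by ring⟩
    
  rw [h2, hodd.neg_one_pow] at h1
  have : Stmt15Aux.wp M 0 L = 0 := by linarith
  exact P0 this
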